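/- Let $a,b>0$ with $a+b=1$, $a$ irrational. Then the rounding map $R(x)=\lfloor x\rfloor + 1/2$ maps the union $(\mathbb{Z}+1/2)/a \cup (\mathbb{Z}+1/2)/b$ bijectively onto $\mathbb{Z}+1/2$. -/

import Mathlib

lemma half_ne_int_mul (a : ℝ) (ha : Irrational a) (k n : ℤ) :
    ((n:ℝ) + 1/2) ≠ (k:ℝ) * a := by
  intro h
  rcases eq_or_ne k 0 with hk | hk
  · rw [hk] at h
    push_cast at h
    have h2 : ((2*n+1 : ℤ) : ℝ) = ((0:ℤ):ℝ) := by push_cast; linarith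
    have := Int.cast_injective (α := ℝ) h2
    omega
  · exact (ha.intCast_mul hk) ⟨(n:ℚ)+1/2, by push_cast; linarith⟩

lemma floor_half_div (c : ℝ) (hc : 0 < c) (n k : ℤ) :
    ⌊((n:ℝ)+1/2)/c⌋ = k ↔ ((k:ℝ)*c ≤ (n:ℝ)+1/2 ∧ (n:ℝ)+1/2 < ((k:ℝ)+1)*c) := by
  rw [Int.floor_eq_iff, le_div_iff₀ hc, div_lt_iff₀ hc]

theorem rounding_map_bijective (a b : ℝ) (ha : Irrational a) (h0 : 0 < a)
    (hb : 0 < b) (hab : a + b = 1) :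
    Set.BijOn (fun x : ℝ => (⌊x⌋ : ℝ) + 1/2)
      ({x : ℝ | ∃ n : ℤ, x = ((n : ℝ) + 1/2) / a} ∪
        {x : ℝ | ∃ n : ℤ, x = ((n : ℝ) + 1/2) / b})
      {y : ℝ | ∃ n : ℤ, y = (n : ℝ) + 1/2} := by
  have ha1 : a < 1 := by linarith
  have hb1 : b < 1 := by linarith
  have hbeq : b = 1 - a := by linarith
  -- mixed case is impossible
  have hmix : ∀ (k n m : ℤ), (k:ℝ)*a ≤ (n:ℝ)+1/2 → (n:ℝ)+1/2 < ((k:ℝ)+1)*a →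
      (k:ℝ)*b ≤ (m:ℝ)+1/2 → (m:ℝ)+1/2 < ((k:ℝ)+1)*b → False := by
    intro k n m h1 h2 h3 h4
    have hk : (k:ℝ)*a + (k:ℝ)*b = (k:ℝ) := by
      calc (k:ℝ)*a + (k:ℝ)*b = (k:ℝ)*(a+b) := by ring
        _ = (k:ℝ) := by rw [hab]; ring
    have hk1 : ((k:ℝ)+1)*a + ((k:ℝ)+1)*b = (k:ℝ)+1 := by
      calc ((k:ℝ)+1)*a + ((k:ℝ)+1)*b = ((k:ℝ)+1)*(a+b) := by ring
        _ = (k:ℝ)+1 := by rw [hab]; ring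
    have l1 : (k:ℝ) ≤ ((n+m+1 : ℤ):ℝ) := by push_cast; linarith
    have l2 : ((n+m+1 : ℤ):ℝ) < ((k+1 : ℤ):ℝ) := by push_cast; linarith
    have e1 : k ≤ n + m + 1 := by exact_mod_cast l1
    have e2 : n + m + 1 < k + 1 := by exact_mod_cast l2
    have he : n + m + 1 = k := by omega
    have hsum : (n:ℝ) + 1/2 + ((m:ℝ) + 1/2) = (k:ℝ) := by
      have : ((n+m+1 : ℤ):ℝ) = ((k:ℤ):ℝ) := by exact_mod_cast he
      push_cast at this
      linarith
    have : (n:ℝ) + 1/2 = (k:ℝ)*a := by linarith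
    exact half_ne_int_mul a ha k n this
  -- same-set uniqueness
  have hsame : ∀ (c : ℝ), 0 < c → c < 1 → ∀ (n n' : ℤ),
      ⌊((n:ℝ)+1/2)/c⌋ = ⌊((n':ℝ)+1/2)/c⌋ → n = n' := by
    intro c hc hc1 n n' h
    obtain ⟨l1, l2⟩ := (floor_half_div c hc n ⌊((n:ℝ)+1/2)/c⌋).mp rfl
    obtain ⟨l3, l4⟩ := (floor_half_div c hc n' ⌊((n:ℝ)+1/2)/c⌋).mp h.symm
    have hx : ((⌊((n:ℝ)+1/2)/c⌋ : ℝ)+1)*c = (⌊((n:ℝ)+1/2)/c⌋ : ℝ)*c + c := by ring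
    have d1 : ((n:ℤ):ℝ) < ((n'+1 : ℤ):ℝ) := by push_cast; linarith
    have d2 : ((n':ℤ):ℝ) < ((n+1 : ℤ):ℝ) := by push_cast; linarith
    have e1 : n < n' + 1 := by exact_mod_cast d1
    have e2 : n' < n + 1 := by exact_mod_cast d2
    omega
  refine ⟨fun x _ => ⟨⌊x⌋, rfl⟩, ?_, ?_⟩
  · -- InjOn
    intro x hx x' hx' he
    simp only at he
    have hkr : (⌊x⌋ : ℝ) = (⌊x'⌋ : ℝ) := by linarith
    have hk : ⌊x⌋ = ⌊x'⌋ := by exact_mod_cast hkr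
    rcases hx with ⟨n, rfl⟩ | ⟨n, rfl⟩ <;> rcases hx' with ⟨n', rfl⟩ | ⟨n', rfl⟩
    · have := hsame a h0 ha1 n n' hk; subst this; rfl
    · -- n from a, n' from b
      exfalso
      obtain ⟨l1, l2⟩ := (floor_half_div a h0 n ⌊((n:ℝ)+1/2)/a⌋).mp rfl
      obtain ⟨l3, l4⟩ := (floor_half_div b hb n' ⌊((n:ℝ)+1/2)/a⌋).mp hk.symm
      exact hmix _ n n' l1 l2 l3 l4
    · exfalso
      obtain ⟨l1, l2⟩ := (floor_half_div a h0 n' ⌊((n:ℝ)+1/2)/b⌋).mp hk.symm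
      obtain ⟨l3, l4⟩ := (floor_half_div b hb n ⌊((n:ℝ)+1/2)/b⌋).mp rfl
      exact hmix _ n' n l1 l2 l3 l4
    · have := hsame b hb hb1 n n' hk; subst this; rfl
  · -- SurjOn
    rintro y ⟨m, rfl⟩
    set n0 := ⌊(m:ℝ)*a + 1/2⌋ with hn0
    have l1 : (n0:ℝ) ≤ (m:ℝ)*a + 1/2 := Int.floor_le _
    have l2 : (m:ℝ)*a + 1/2 < (n0:ℝ) + 1 := Int.lt_floor_add_one _
    have hlow : (m:ℝ)*a < (n0:ℝ) + 1/2 := by linarith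
    have hhigh : (n0:ℝ) + 1/2 < (m:ℝ)*a + 1 := by
      rcases lt_or_eq_of_le l1 with h | h
      · linarith
      · exfalso
        apply half_ne_int_mul a ha m (n0 - 1)
        push_cast
        linarith
    by_cases hcase : (n0:ℝ) + 1/2 < ((m:ℝ)+1)*a
    · refine ⟨((n0:ℝ)+1/2)/a, Or.inl ⟨n0, rfl⟩, ?_⟩
      have hf : ⌊((n0:ℝ)+1/2)/a⌋ = m :=
        (floor_half_div a h0 n0 m).mpr ⟨le_of_lt hlow, hcase⟩
      simp only [hf]
    · push_neg at hcase
      have hstrict : ((m:ℝ)+1)*a < (n0:ℝ) + 1/2 := by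
        rcases lt_or_eq_of_le hcase with h | h
        · exact h
        · exfalso
          apply half_ne_int_mul a ha (m+1) n0
          push_cast
          linarith
      refine ⟨(((m - n0 : ℤ):ℝ)+1/2)/b, Or.inr ⟨m - n0, rfl⟩, ?_⟩
      have hf : ⌊(((m - n0 : ℤ):ℝ)+1/2)/b⌋ = m := by
        rw [floor_half_div b hb (m - n0) m]
        constructor
        · push_cast
          rw [hbeq]
          nlinarith [hhigh]
        · push_cast
          rw [hbeq]
          nlinarith [hstrict]
      simp only [hf]
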